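/- Let f(Y) = trace(Q X(Y) + Y* R Y X(Y)⁻¹) where X(Y) solves A X + X A* − B Y − Y* B* + V = 0, defined on the open set D_s of Y with X(Y) ≻ 0. Then the Hessian quadratic form of f satisfies ⟨Ỹ, ∇²f(Y; Ỹ)⟩ = 2 ‖R^{1/2} (Ỹ − Y X⁻¹ ℳ(Ỹ)) X^{−1/2}‖_F², where ℳ(Ỹ) solves A ℳ + ℳ A* = B Ỹ + Ỹ* B*. -/

import Mathlib

open Matrix
open scoped ComplexOrder

attribute [local instance] Matrix.linftyOpNormedRing Matrix.linftyOpNormedAlgebra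

section aux

variable {n : ℕ}

noncomputable def trCLM (n : ℕ) : Matrix (Fin n) (Fin n) ℂ →L[ℝ] ℂ :=
  LinearMap.toContinuousLinearMap ((Matrix.traceLinearMap (Fin n) ℂ ℂ).restrictScalars ℝ)

lemma hasDerivAt_trace {g : ℝ → Matrix (Fin n) (Fin n) ℂ} {g' : Matrix (Fin n) (Fin n) ℂ}
    {x : ℝ} (hg : HasDerivAt g g' x) :
    HasDerivAt (fun t => (g t).trace) g'.trace x := by
  have := (trCLM n).hasFDerivAt.comp_hasDerivAt x hg
  exact this

lemma hasDerivAt_matinv {g : ℝ → Matrix (Fin n) (Fin n) ℂ} {g' : Matrix (Fin n) (Fin n) ℂ}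
    {x : ℝ} (hg : HasDerivAt g g' x) (hu : IsUnit (g x)) :
    HasDerivAt (fun t => (g t)⁻¹) (-((g x)⁻¹ * g' * (g x)⁻¹)) x := by
  have h1 : HasFDerivAt Ring.inverse
      (-ContinuousLinearMap.mulLeftRight ℝ _ ↑hu.unit⁻¹ ↑hu.unit⁻¹) (g x) := by
    simpa [hu.unit_spec] using hasFDerivAt_ringInverse (𝕜 := ℝ) hu.unit
  have h2 := h1.comp_hasDerivAt x hg
  have he : (fun t => (g t)⁻¹) = fun t => Ring.inverse (g t) := by
    funext t; rw [Matrix.nonsing_inv_eq_ringInverse]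
  rw [he]
  refine h2.congr_deriv ?_
  simp [Matrix.coe_units_inv, hu.unit_spec, Matrix.nonsing_inv_eq_ringInverse, mul_assoc]

end aux

set_option maxHeartbeats 2000000 in
/-- Hessian quadratic form of f(Y) = trace(Q X(Y) + Yᴴ R Y X(Y)⁻¹):
⟨Ỹ, ∇²f(Y; Ỹ)⟩ = 2‖R^{1/2}(Ỹ − Y X⁻¹ ℳ(Ỹ)) X^{−1/2}‖_F². -/
theorem stmt11 {n m : ℕ} (A : Matrix (Fin n) (Fin n) ℂ) (B : Matrix (Fin n) (Fin m) ℂ)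
    (Q V : Matrix (Fin n) (Fin n) ℂ) (R : Matrix (Fin m) (Fin m) ℂ)
    (hQ : Q.PosDef) (hR : R.PosDef) (hV : V.PosDef)
    (X : Matrix (Fin m) (Fin n) ℂ → Matrix (Fin n) (Fin n) ℂ)
    (hX : ∀ Y, A * X Y + X Y * Aᴴ - B * Y - Yᴴ * Bᴴ + V = 0)
    (hLyapInj : ∀ Z : Matrix (Fin n) (Fin n) ℂ, A * Z + Z * Aᴴ = 0 → Z = 0)
    (Y Yt : Matrix (Fin m) (Fin n) ℂ) (hY : (X Y).PosDef)
    (M : Matrix (Fin n) (Fin n) ℂ) (hM : A * M + M * Aᴴ = B * Yt + Ytᴴ * Bᴴ)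
    (Rh : Matrix (Fin m) (Fin m) ℂ) (hRh : Rh.PosSemidef) (hRh2 : Rh * Rh = R)
    (Xih : Matrix (Fin n) (Fin n) ℂ) (hXih : Xih.PosSemidef) (hXih2 : Xih * Xih = (X Y)⁻¹) :
    iteratedDeriv 2 (fun ε : ℝ =>
        ((Q * X (Y + ε • Yt)).trace +
          ((Y + ε • Yt)ᴴ * R * (Y + ε • Yt) * (X (Y + ε • Yt))⁻¹).trace).re) 0 =
      2 * ∑ i, ∑ j, Complex.normSq ((Rh * (Yt - Y * (X Y)⁻¹ * M) * Xih) i j) := by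
  classical
  -- abbreviations
  set X0 := X Y with hX0
  set Xi := (X Y)⁻¹ with hXi
  -- the solution map is affine along the line Y + ε Yt
  have hconj : ∀ ε : ℝ, (Y + ε • Yt)ᴴ = Yᴴ + ε • Ytᴴ := by
    intro ε; simp [conjTranspose_add, conjTranspose_smul]
  have hXe : ∀ ε : ℝ, X (Y + ε • Yt) = X0 + ε • M := by
    intro ε
    have h1 := hX (Y + ε • Yt)
    have h2 := hX Y
    have key : A * (X (Y + ε • Yt) - (X0 + ε • M)) +
        (X (Y + ε • Yt) - (X0 + ε • M)) * Aᴴ = 0 := by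
      have e1 : A * X (Y + ε • Yt) + X (Y + ε • Yt) * Aᴴ
          = B * (Y + ε • Yt) + (Y + ε • Yt)ᴴ * Bᴴ - V := by
        rw [← sub_eq_zero, ← h1]; abel
      have e2 : A * X0 + X0 * Aᴴ = B * Y + Yᴴ * Bᴴ - V := by
        rw [← sub_eq_zero, ← h2]; abel
      have expand : A * (X (Y + ε • Yt) - (X0 + ε • M)) +
          (X (Y + ε • Yt) - (X0 + ε • M)) * Aᴴ
          = (A * X (Y + ε • Yt) + X (Y + ε • Yt) * Aᴴ)
            - (A * X0 + X0 * Aᴴ) - ε • (A * M + M * Aᴴ) := by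
        simp only [Matrix.mul_sub, Matrix.sub_mul, Matrix.mul_add, Matrix.add_mul,
          Matrix.mul_smul, Matrix.smul_mul, smul_add]
        abel
      rw [expand, e1, e2, hM, hconj ε]
      simp only [Matrix.mul_add, Matrix.add_mul, Matrix.mul_smul, Matrix.smul_mul, smul_add]
      abel
    have := hLyapInj _ key
    rw [sub_eq_zero] at this
    exact this
  -- Hermitian / invertibility facts
  have hX0h : X0ᴴ = X0 := hY.1
  have hXih' : Xiᴴ = Xi := hY.1.inv
  have hMh : Mᴴ = M := by
    have key : A * (Mᴴ - M) + (Mᴴ - M) * Aᴴ = 0 := by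
      have h2 : A * Mᴴ + Mᴴ * Aᴴ = B * Yt + Ytᴴ * Bᴴ := by
        have := congrArg conjTranspose hM
        simpa [conjTranspose_add, conjTranspose_mul, add_comm] using this
      have expand : A * (Mᴴ - M) + (Mᴴ - M) * Aᴴ
          = (A * Mᴴ + Mᴴ * Aᴴ) - (A * M + M * Aᴴ) := by
        simp only [Matrix.mul_sub, Matrix.sub_mul]; abel
      rw [expand, h2, hM, sub_self]
    have := hLyapInj _ key
    rw [sub_eq_zero] at this
    exact this
  have hUnit : IsUnit X0 := hY.isUnit
  -- quadratic expansion of the numerator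
  set P0 := Yᴴ * R * Y with hP0
  set P1 := Ytᴴ * R * Y + Yᴴ * R * Yt with hP1
  set P2 := Ytᴴ * R * Yt with hP2
  have hPm : ∀ ε : ℝ, (Y + ε • Yt)ᴴ * R * (Y + ε • Yt)
      = P0 + ε • P1 + (ε * ε) • P2 := by
    intro ε
    rw [hconj ε]
    simp only [Matrix.add_mul, Matrix.mul_add, Matrix.smul_mul, Matrix.mul_smul,
      smul_add, smul_smul, hP0, hP1, hP2]
    abel

  -- the affine path and its inverse
  set Xe : ℝ → Matrix (Fin n) (Fin n) ℂ := fun ε => X0 + ε • M with hXedef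
  set N : ℝ → Matrix (Fin n) (Fin n) ℂ := fun ε => (Xe ε)⁻¹ with hNdef
  have hXeDeriv : ∀ ε : ℝ, HasDerivAt Xe M ε := by
    intro ε
    have := ((hasDerivAt_id ε).smul_const M).const_add X0
    simp only [id, one_smul] at this
    exact this
  have hXecont : Continuous Xe := by
    have h : Continuous fun ε : ℝ => ε • M := continuous_id.smul continuous_const
    exact continuous_const.add h
  set U : Set ℝ := Xe ⁻¹' {x | IsUnit x} with hUdef
  have hUopen : IsOpen U := Units.isOpen.preimage hXecont
  have hXe0 : Xe 0 = X0 := by simp [hXedef]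
  have hU0 : (0:ℝ) ∈ U := by
    simp only [hUdef, Set.mem_preimage, Set.mem_setOf_eq, hXe0]
    exact hUnit
  have hN0 : N 0 = Xi := by rw [hNdef]; simp only [hXe0]; rfl
  have hNDeriv : ∀ ε ∈ U, HasDerivAt N (-(N ε * M * N ε)) ε := fun ε hε =>
    hasDerivAt_matinv (hXeDeriv ε) hε
  -- the function and its first derivative
  set F : ℝ → ℂ := fun ε =>
    (Q * Xe ε).trace + ((P0 + ε • P1 + (ε*ε) • P2) * N ε).trace with hFdef
  set F' : ℝ → ℂ := fun ε => (Q * M).trace +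
      ((P1 + (2*ε) • P2) * N ε + (P0 + ε • P1 + (ε*ε) • P2) * -(N ε * M * N ε)).trace
    with hF'def
  have hFDeriv : ∀ ε ∈ U, HasDerivAt F (F' ε) ε := by
    intro ε hε
    have t1 : HasDerivAt (fun t : ℝ => (Q * Xe t).trace) (Q * M).trace ε :=
      hasDerivAt_trace ((hXeDeriv ε).const_mul Q)
    have h1 : HasDerivAt (fun t : ℝ => t • P1) P1 ε := by
      have := (hasDerivAt_id ε).smul_const P1
      simp only [id, one_smul] at this
      exact this
    have h2 : HasDerivAt (fun t : ℝ => (t*t) • P2) ((2*ε) • P2) ε := by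
      have := ((hasDerivAt_id ε).mul (hasDerivAt_id ε)).smul_const P2
      simp only [id, one_mul, mul_one, ← two_mul] at this
      exact this
    have hp : HasDerivAt (fun t : ℝ => P0 + t • P1 + (t*t) • P2)
        (P1 + (2*ε) • P2) ε := (h1.const_add P0).add h2
    have t2 := hasDerivAt_trace (hp.mul (hNDeriv ε hε))
    exact (t1.add t2).congr_deriv (by simp [hF'def, Matrix.trace_add])
  set g : ℝ → ℝ := fun ε => (F ε).re with hgdef
  have hgDeriv : ∀ ε ∈ U, HasDerivAt g ((F' ε).re) ε := by
    intro ε hε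
    exact Complex.reCLM.hasFDerivAt.comp_hasDerivAt ε (hFDeriv ε hε)
  have hgfun : (fun ε : ℝ => ((Q * X (Y + ε • Yt)).trace +
      ((Y + ε • Yt)ᴴ * R * (Y + ε • Yt) * (X (Y + ε • Yt))⁻¹).trace).re) = g := by
    funext ε
    rw [hgdef]
    simp only [hFdef, hXe ε, hPm ε, hNdef, hXedef]
  rw [hgfun]
  have h2it : iteratedDeriv 2 g 0 = deriv (deriv g) 0 := by
    simp [iteratedDeriv_succ, iteratedDeriv_one]
  have hev : deriv g =ᶠ[nhds 0] fun ε => (F' ε).re :=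
    Filter.eventually_of_mem (hUopen.mem_nhds hU0) fun ε hε => (hgDeriv ε hε).deriv
  rw [h2it, hev.deriv_eq]

  -- second derivative at 0
  have hN0' : HasDerivAt N (-(Xi * M * Xi)) 0 := by
    have := hNDeriv 0 hU0
    rwa [hN0] at this
  have c1 : HasDerivAt (fun ε : ℝ => P1 + (2*ε) • P2) ((2:ℝ) • P2) 0 := by
    have h := ((hasDerivAt_id (0:ℝ)).const_mul (2:ℝ)).smul_const P2
    have := h.const_add P1
    simp only [id, mul_one] at this
    exact this
  have d1 := c1.mul hN0'
  rw [hN0] at d1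
  have hq1 : HasDerivAt (fun t : ℝ => t • P1) P1 0 := by
    have := (hasDerivAt_id (0:ℝ)).smul_const P1
    simp only [id, one_smul] at this
    exact this
  have hq2 : HasDerivAt (fun t : ℝ => (t*t) • P2) ((2*(0:ℝ)) • P2) 0 := by
    have := ((hasDerivAt_id (0:ℝ)).mul (hasDerivAt_id (0:ℝ))).smul_const P2
    simp only [id, one_mul, mul_one, ← two_mul] at this
    exact this
  have cq : HasDerivAt (fun t : ℝ => P0 + t • P1 + (t*t) • P2) (P1 + (2*(0:ℝ)) • P2) 0 :=
    (hq1.const_add P0).add hq2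
  have d2pre := ((hN0'.mul_const M).mul hN0').neg
  rw [hN0] at d2pre
  have d2 := cq.mul d2pre
  simp only [Pi.neg_apply, Pi.mul_apply, hN0] at d2
  have dF'c : HasDerivAt F'
      (0 + ((2:ℝ) • P2 * Xi + (P1 + (2 * (0:ℝ)) • P2) * -(Xi * M * Xi) +
        ((P1 + (2*(0:ℝ)) • P2) * -(Xi * M * Xi) +
          (P0 + (0:ℝ) • P1 + ((0:ℝ)*(0:ℝ)) • P2) *
            -(-(Xi * M * Xi) * M * Xi + Xi * M * -(Xi * M * Xi)))).trace) 0 := by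
    exact (hasDerivAt_const 0 ((Q * M).trace)).add (hasDerivAt_trace (d1.add d2))
  have dF'' := Complex.reCLM.hasFDerivAt.comp_hasDerivAt 0 dF'c

  have hd : HasDerivAt (fun ε => (F' ε).re)
      ((0 + ((2:ℝ) • P2 * Xi + (P1 + (2 * (0:ℝ)) • P2) * -(Xi * M * Xi) +
        ((P1 + (2*(0:ℝ)) • P2) * -(Xi * M * Xi) +
          (P0 + (0:ℝ) • P1 + ((0:ℝ)*(0:ℝ)) • P2) *
            -(-(Xi * M * Xi) * M * Xi + Xi * M * -(Xi * M * Xi)))).trace).re) 0 := dF''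
  rw [hd.deriv]
  set C : Matrix (Fin m) (Fin n) ℂ := Yt - Y * Xi * M with hC
  set W : Matrix (Fin m) (Fin n) ℂ := Rh * C * Xih with hW
  -- algebraic identification of the second derivative matrix
  have hDeq : (2:ℝ) • P2 * Xi + (P1 + (2 * (0:ℝ)) • P2) * -(Xi * M * Xi) +
        ((P1 + (2*(0:ℝ)) • P2) * -(Xi * M * Xi) +
          (P0 + (0:ℝ) • P1 + ((0:ℝ)*(0:ℝ)) • P2) *
            -(-(Xi * M * Xi) * M * Xi + Xi * M * -(Xi * M * Xi)))
      = (P2 * Xi - P1 * (Xi * M * Xi) + P0 * (Xi * M * Xi * M * Xi)) +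
        (P2 * Xi - P1 * (Xi * M * Xi) + P0 * (Xi * M * Xi * M * Xi)) := by
    simp only [mul_zero, zero_mul, zero_smul, add_zero, two_smul]
    noncomm_ring
  -- conjugate of C
  have hCconj : Cᴴ = Ytᴴ - M * (Xi * Yᴴ) := by
    rw [hC]
    simp [Matrix.conjTranspose_sub, Matrix.conjTranspose_mul, hMh, hXih', Matrix.mul_assoc]
  -- trace of Wᴴ W
  have key : (Wᴴ * W).trace = (Cᴴ * R * C * Xi).trace := by
    have e1 : Wᴴ * W = Xih * (Cᴴ * R * C) * Xih := by
      rw [hW]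
      simp only [Matrix.conjTranspose_mul, hXih.1.eq, hRh.1.eq, ← hRh2]
      simp only [Matrix.mul_assoc]
    rw [e1, Matrix.trace_mul_cycle, hXih2, Matrix.trace_mul_comm]
  -- trace identity
  have goal_alg : (P2 * Xi - P1 * (Xi * M * Xi) + P0 * (Xi * M * Xi * M * Xi)).trace
      = (Cᴴ * R * C * Xi).trace := by
    have r1 : (M * (Xi * (Yᴴ * (R * (Yt * Xi))))).trace
        = (Yᴴ * (R * (Yt * (Xi * (M * Xi))))).trace := by
      have := Matrix.trace_mul_comm (M * Xi) (Yᴴ * (R * (Yt * Xi)))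
      simpa [Matrix.mul_assoc] using this
    have r2 : (M * (Xi * (Yᴴ * (R * (Y * (Xi * (M * Xi))))))).trace
        = (Yᴴ * (R * (Y * (Xi * (M * (Xi * (M * Xi))))))).trace := by
      have := Matrix.trace_mul_comm (M * Xi) (Yᴴ * (R * (Y * (Xi * (M * Xi)))))
      simpa [Matrix.mul_assoc] using this
    rw [hCconj, hC, hP0, hP1, hP2]
    simp only [Matrix.sub_mul, Matrix.mul_sub, Matrix.add_mul, Matrix.mul_add,
      Matrix.trace_sub, Matrix.trace_add, Matrix.mul_assoc]
    rw [r1, r2]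
    ring
  -- sum of squares
  have hsum : (Wᴴ * W).trace = ((∑ i, ∑ j, Complex.normSq (W i j) : ℝ) : ℂ) := by
    simp only [Matrix.trace, Matrix.diag, Matrix.mul_apply, Matrix.conjTranspose_apply]
    rw [Finset.sum_comm]
    push_cast
    simp_rw [Complex.normSq_eq_conj_mul_self]
    simp [Complex.star_def]
  have final : (0 + ((2:ℝ) • P2 * Xi + (P1 + (2 * (0:ℝ)) • P2) * -(Xi * M * Xi) +
        ((P1 + (2*(0:ℝ)) • P2) * -(Xi * M * Xi) +
          (P0 + (0:ℝ) • P1 + ((0:ℝ)*(0:ℝ)) • P2) *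
            -(-(Xi * M * Xi) * M * Xi + Xi * M * -(Xi * M * Xi)))).trace : ℂ)
      = ((2 * ∑ i, ∑ j, Complex.normSq (W i j) : ℝ) : ℂ) := by
    rw [zero_add, hDeq, Matrix.trace_add, goal_alg, ← key, hsum]
    push_cast
    ring
  rw [final]
  simp
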